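/- Let G be a (pan, even hole)-free graph, B an odd ℓ-buoy in G (ℓ ≥ 5), and x a vertex outside B having a neighbor in bag B_i. Then x has a neighbor in B_{i-1} or a neighbor in B_{i+1}. -/

import Mathlib

def IsHole {V : Type*} (G : SimpleGraph V) (n : ℕ) (f : ZMod n → V) : Prop :=
  4 ≤ n ∧ Function.Injective f ∧
    ∀ i j : ZMod n, G.Adj (f i) (f j) ↔ (j = i + 1 ∨ i = j + 1)

def HasInducedPan {V : Type*} (G : SimpleGraph V) : Prop :=
  ∃ (n : ℕ) (f : ZMod n → V) (x : V),
    IsHole G n f ∧ x ∉ Set.range f ∧ ∃! i : ZMod n, G.Adj x (f i)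

def HasEvenHole {V : Type*} (G : SimpleGraph V) : Prop :=
  ∃ (n : ℕ) (f : ZMod n → V), IsHole G n f ∧ Even n

def IsBuoy {V : Type*} (G : SimpleGraph V) (ℓ : ℕ) (B : ZMod ℓ → Set V) : Prop :=
  5 ≤ ℓ ∧
  (∀ i, (B i).Nonempty) ∧
  (∀ i, G.IsClique (B i)) ∧
  (Pairwise fun i j => Disjoint (B i) (B j)) ∧
  (∀ i, ∀ v ∈ B i, ∃ u ∈ B (i + 1), G.Adj v u) ∧
  (∀ i, ∀ v ∈ B i, ∃ u ∈ B (i - 1), G.Adj v u) ∧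
  (∀ i j : ZMod ℓ, j ≠ i → j ≠ i + 1 → j ≠ i - 1 →
    ∀ v ∈ B i, ∀ u ∈ B j, ¬ G.Adj v u)

lemma aux_natCast_inj {n a b : ℕ} (ha : a < n) (hb : b < n) :
    (a : ZMod n) = (b : ZMod n) ↔ a = b := by
  constructor
  · intro h
    have := congrArg ZMod.val h
    rwa [ZMod.val_cast_of_lt ha, ZMod.val_cast_of_lt hb] at this
  · rintro rfl; rfl

lemma aux_succ_iff {n : ℕ} (hn : 4 ≤ n) (z w : ZMod n) :
    w = z + 1 ↔ ((z.val + 1 = n ∧ w.val = 0) ∨ w.val = z.val + 1) := by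
  have : NeZero n := ⟨by omega⟩
  have hz := ZMod.val_lt z
  have hw := ZMod.val_lt w
  have key : (w = z + 1) ↔ ((w.val : ℕ) : ZMod n) = ((z.val + 1 : ℕ) : ZMod n) := by
    push_cast
    simp [ZMod.natCast_val]
  rw [key, ZMod.natCast_eq_natCast_iff]
  unfold Nat.ModEq
  rcases Nat.lt_or_ge (z.val + 1) n with h | h
  · rw [Nat.mod_eq_of_lt hw, Nat.mod_eq_of_lt h]
    omega
  · have h' : z.val + 1 = n := by omega
    rw [Nat.mod_eq_of_lt hw, h', Nat.mod_self]
    omega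

lemma aux_natHole {V : Type*} {G : SimpleGraph V} {n : ℕ} (hn : 4 ≤ n) (c : ℕ → V)
    (hinj : ∀ j k, j < n → k < n → c j = c k → j = k)
    (hadj : ∀ k, k + 1 < n → G.Adj (c k) (c (k + 1)))
    (hwrap : G.Adj (c (n - 1)) (c 0))
    (hnon : ∀ j k, j + 2 ≤ k → k < n → ¬(j = 0 ∧ k = n - 1) → ¬ G.Adj (c j) (c k)) :
    IsHole G n (fun z => c z.val) := by
  have : NeZero n := ⟨by omega⟩
  refine ⟨hn, ?_, ?_⟩
  · intro z w h
    have hv : z.val = w.val := hinj _ _ (ZMod.val_lt z) (ZMod.val_lt w) h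
    have : ((z.val : ℕ) : ZMod n) = ((w.val : ℕ) : ZMod n) := by rw [hv]
    simpa [ZMod.natCast_val] using this
  · intro z w
    have hz := ZMod.val_lt z
    have hw := ZMod.val_lt w
    rw [aux_succ_iff hn z w, aux_succ_iff hn w z]
    set a := z.val with hA
    set b := w.val with hB
    constructor
    · intro hadj'
      have hadj2 : G.Adj (c a) (c b) := hadj'
      have claim : b = a + 1 ∨ a = b + 1 ∨ (a = 0 ∧ b = n - 1) ∨ (b = 0 ∧ a = n - 1) := by
        rcases lt_trichotomy a b with h | h | h
        · by_cases he : b = a + 1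
          · exact Or.inl he
          · by_cases hp : a = 0 ∧ b = n - 1
            · exact Or.inr (Or.inr (Or.inl hp))
            · exact absurd hadj2 (hnon a b (by omega) hw hp)
        · exact absurd hadj2 (by rw [h]; exact G.irrefl)
        · by_cases he : a = b + 1
          · exact Or.inr (Or.inl he)
          · by_cases hp : b = 0 ∧ a = n - 1
            · exact Or.inr (Or.inr (Or.inr hp))
            · exact absurd hadj2.symm (hnon b a (by omega) hz hp)
      omega
    · intro h
      show G.Adj (c a) (c b)
      rcases h with (⟨h1, h2⟩ | h) | (⟨h1, h2⟩ | h)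
      · rw [show a = n - 1 by omega, h2]; exact hwrap
      · rw [h]; exact hadj a (by omega)
      · rw [show b = n - 1 by omega, h2]; exact hwrap.symm
      · rw [h]; exact (hadj b (by omega)).symm

set_option maxHeartbeats 1600000 in
theorem stmt_11 {V : Type*} (G : SimpleGraph V)
    (hpan : ¬ HasInducedPan G) (heven : ¬ HasEvenHole G)
    (ℓ : ℕ) (hodd : Odd ℓ) (B : ZMod ℓ → Set V) (hB : IsBuoy G ℓ B)
    (x : V) (hx : x ∉ ⋃ j, B j)
    (i : ZMod ℓ) (hi : ∃ b ∈ B i, G.Adj x b) :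
    (∃ b ∈ B (i - 1), G.Adj x b) ∨ (∃ b ∈ B (i + 1), G.Adj x b) := by
  classical
  obtain ⟨h5, hne, hclq, hdisjP, hfwdB, hbwdB, hfarB⟩ := hB
  have hNZ : NeZero ℓ := ⟨by omega⟩
  by_contra hcon
  push_neg at hcon
  obtain ⟨hnoM, hnoP⟩ := hcon
  set D : ZMod ℓ → Set V := fun j => B (i + j) with hD
  have hclqD : ∀ j, G.IsClique (D j) := fun j => hclq (i + j)
  have hdisjD : ∀ j k : ZMod ℓ, j ≠ k → Disjoint (D j) (D k) := by
    intro j k h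
    exact hdisjP (show i + j ≠ i + k by simpa using h)
  have hfwdD : ∀ j : ZMod ℓ, ∀ v ∈ D j, ∃ u ∈ D (j + 1), G.Adj v u := by
    intro j v hv
    have := hfwdB (i + j) v hv
    simpa [hD, add_assoc] using this
  have hfarD : ∀ j k : ZMod ℓ, k ≠ j → k ≠ j + 1 → k ≠ j - 1 →
      ∀ v ∈ D j, ∀ u ∈ D k, ¬ G.Adj v u := by
    intro j k h1 h2 h3 v hv u hu
    refine hfarB (i + j) (i + k) ?_ ?_ ?_ v hv u hu
    · simpa using h1
    · rw [add_assoc]; simpa using h2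
    · rw [add_sub_assoc]; simpa using h3
  have hxD : ∀ j : ZMod ℓ, ∀ u ∈ D j, x ≠ u := by
    intro j u hu h
    exact hx (Set.mem_iUnion.2 ⟨i + j, h ▸ hu⟩)
  have hnoP' : ∀ u ∈ D 1, ¬ G.Adj x u := fun u hu => hnoP u hu
  have hnoM' : ∀ u ∈ D (-1), ¬ G.Adj x u := by
    intro u hu
    refine hnoM u ?_
    rw [sub_eq_add_neg]
    exact hu
  obtain ⟨a, haB, hxa⟩ := hi
  have haD : a ∈ D 0 := by
    show a ∈ B (i + 0)
    rwa [add_zero]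
  -- cast helpers
  have hl1 : ((ℓ - 1 : ℕ) : ZMod ℓ) = -1 := by
    push_cast [Nat.cast_sub (show 1 ≤ ℓ by omega)]
    simp
  have hmemNe : ∀ j k : ℕ, j < ℓ → k < ℓ → j ≠ k →
      ∀ u ∈ D (j : ZMod ℓ), ∀ w' ∈ D (k : ZMod ℓ), u ≠ w' := by
    intro j k hj hk hne' u hu w' hw' heq
    have hjk : (j : ZMod ℓ) ≠ (k : ZMod ℓ) := fun h => hne' ((aux_natCast_inj hj hk).1 h)
    exact Set.disjoint_left.mp (hdisjD _ _ hjk) hu (heq ▸ hw')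
  have hfarNat : ∀ j k : ℕ, k < ℓ → j + 2 ≤ k → ¬(j = 0 ∧ k = ℓ - 1) →
      ∀ u ∈ D (j : ZMod ℓ), ∀ w' ∈ D (k : ZMod ℓ), ¬ G.Adj u w' := by
    intro j k hk hjk hnp u hu w' hw'
    have hj : j < ℓ := by omega
    refine hfarD (j : ZMod ℓ) (k : ZMod ℓ) ?_ ?_ ?_ u hu w' hw'
    · intro h; exact absurd ((aux_natCast_inj hk hj).1 h) (by omega)
    · intro h
      have h' : ((k : ℕ) : ZMod ℓ) = ((j + 1 : ℕ) : ZMod ℓ) := by push_cast; exact h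
      exact absurd ((aux_natCast_inj hk (by omega)).1 h') (by omega)
    · intro h
      have h' : ((k + 1 : ℕ) : ZMod ℓ) = ((j : ℕ) : ZMod ℓ) := by
        push_cast; rw [h]; ring
      rcases Nat.lt_or_ge (k + 1) ℓ with hk1 | hk1
      · exact absurd ((aux_natCast_inj hk1 hj).1 h') (by omega)
      · have hkk : k + 1 = ℓ := by omega
        have h0 : ((0 : ℕ) : ZMod ℓ) = ((j : ℕ) : ZMod ℓ) := by
          rw [← h', hkk]; simp
        have hj0 : j = 0 := ((aux_natCast_inj (by omega) hj).1 h0).symm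
        exact hnp ⟨hj0, by omega⟩
  -- build the path v
  obtain ⟨v, hv0, hvmem, hvadj⟩ :
      ∃ v : ℕ → V, v 0 = a ∧ (∀ k : ℕ, v k ∈ D (k : ZMod ℓ)) ∧ ∀ k : ℕ, G.Adj (v k) (v (k + 1)) := by
    choose nxt h1 h2 using hfwdD
    let w : ∀ k : ℕ, {u : V // u ∈ D (k : ZMod ℓ)} := fun k =>
      Nat.rec ⟨a, by simpa using haD⟩
        (fun k p => ⟨nxt _ p.1 p.2, by push_cast; exact h1 _ p.1 p.2⟩) k
    exact ⟨fun k => (w k).1, rfl, fun k => (w k).2, fun k => h2 _ (w k).1 (w k).2⟩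
  -- build the ℓ-hole c through a
  obtain ⟨c, hcmem, hcadj, hcwrap, hc0⟩ :
      ∃ c : ℕ → V, (∀ k : ℕ, k < ℓ → c k ∈ D (k : ZMod ℓ)) ∧
        (∀ k : ℕ, k + 1 < ℓ → G.Adj (c k) (c (k + 1))) ∧
        G.Adj (c (ℓ - 1)) (c 0) ∧ c 0 = a := by
    by_cases hw1 : G.Adj (v (ℓ - 1)) (v 0)
    · exact ⟨v, fun k _ => hvmem k, fun k _ => hvadj k, hw1, hv0⟩
    · obtain ⟨w, hwD, haw⟩ := hbwdB (i + 0) a haD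
      have hwD' : w ∈ D (-1) := by
        show w ∈ B (i + -1)
        rw [show i + -1 = i + 0 - 1 by ring]
        exact hwD
      have hwDl : w ∈ D (((ℓ - 1 : ℕ) : ZMod ℓ)) := by rw [hl1]; exact hwD'
      have hwne : w ≠ v (ℓ - 1) := by
        rintro rfl
        exact hw1 (by rw [hv0]; exact haw.symm)
      by_cases hw2 : G.Adj (v (ℓ - 2)) w
      · set g : ℕ → V := fun k => if k = ℓ - 1 then w else v k with hgdef
        have hg : ∀ k, g k = if k = ℓ - 1 then w else v k := fun _ => rfl
        refine ⟨g, ?_, ?_, ?_, ?_⟩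
        · intro k hk
          rw [hg]
          by_cases h : k = ℓ - 1
          · subst h; rw [if_pos rfl]; exact hwDl
          · rw [if_neg h]; exact hvmem k
        · intro k hk
          have hk1 : k ≠ ℓ - 1 := by omega
          rw [hg, hg]
          by_cases h : k + 1 = ℓ - 1
          · rw [if_neg hk1, if_pos h, show k = ℓ - 2 by omega]
            exact hw2
          · rw [if_neg hk1, if_neg h]; exact hvadj k
        · rw [hg, hg, if_pos rfl, if_neg (show (0 : ℕ) ≠ ℓ - 1 by omega), hv0]
          exact haw.symm
        · rw [hg, if_neg (show (0 : ℕ) ≠ ℓ - 1 by omega)]; exact hv0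
      · -- even hole of length ℓ + 1
        exfalso
        apply heven
        set g : ℕ → V := fun k => if k = ℓ then w else v k with hgdef
        have hg : ∀ k, g k = if k = ℓ then w else v k := fun _ => rfl
        refine ⟨ℓ + 1, _, aux_natHole (by omega) g
          ?_ ?_ ?_ ?_, hodd.add_one⟩
        · intro j k hj hk heq
          rw [hg, hg] at heq
          by_cases hjl : j = ℓ <;> by_cases hkl : k = ℓ
          · omega
          · exfalso
            rw [if_pos hjl, if_neg hkl] at heq
            by_cases hk1 : k = ℓ - 1
            · exact hwne (hk1 ▸ heq)
            · exact hmemNe (ℓ - 1) k (by omega) (by omega) (by omega) w hwDl (v k) (hvmem k) heq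
          · exfalso
            rw [if_neg hjl, if_pos hkl] at heq
            by_cases hj1 : j = ℓ - 1
            · exact hwne (hj1 ▸ heq.symm)
            · exact hmemNe (ℓ - 1) j (by omega) (by omega) (by omega) w hwDl (v j) (hvmem j) heq.symm
          · rw [if_neg hjl, if_neg hkl] at heq
            by_contra hne'
            exact hmemNe j k (by omega) (by omega) hne' (v j) (hvmem j) (v k) (hvmem k) heq
        · intro k hk
          have hkl : k ≠ ℓ := by omega
          rw [hg, hg]
          by_cases h : k + 1 = ℓ
          · rw [if_neg hkl, if_pos h]
            have hk2 : k = ℓ - 1 := by omega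
            subst hk2
            have hvl : v (ℓ - 1) ∈ D (-1) := by rw [← hl1]; exact hvmem (ℓ - 1)
            exact hclqD (-1) hvl hwD' (Ne.symm hwne)
          · rw [if_neg hkl, if_neg h]; exact hvadj k
        · simp only [Nat.add_sub_cancel]
          rw [hg, hg, if_pos rfl, if_neg (show (0 : ℕ) ≠ ℓ by omega), hv0]
          exact haw.symm
        · intro j k hjk hk hnp
          rw [Nat.add_sub_cancel] at hnp
          have hjl : j ≠ ℓ := by omega
          rw [hg, hg, if_neg hjl]
          by_cases hkl : k = ℓ
          · rw [if_pos hkl]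
            have hj0 : j ≠ 0 := fun h => hnp ⟨h, hkl⟩
            by_cases hj2 : j = ℓ - 2
            · subst hj2; exact hw2
            · exact hfarNat j (ℓ - 1) (by omega) (by omega) (by omega) (v j) (hvmem j) w hwDl
          · rw [if_neg hkl]
            by_cases hp : j = 0 ∧ k = ℓ - 1
            · obtain ⟨hj0, hk1⟩ := hp
              subst hj0; subst hk1
              rw [hv0]
              intro hadj''
              exact hw1 (by rw [hv0]; exact hadj''.symm)
            · exact hfarNat j k (by omega) hjk hp (v j) (hvmem j) (v k) (hvmem k)
  -- facts about c
  have hxc0 : G.Adj x (c 0) := by rw [hc0]; exact hxa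
  have hcne : ∀ j k : ℕ, j < ℓ → k < ℓ → j ≠ k → c j ≠ c k := fun j k hj hk h =>
    hmemNe j k hj hk h (c j) (hcmem j hj) (c k) (hcmem k hk)
  have hxnc : ∀ k : ℕ, k < ℓ → x ≠ c k := fun k hk => hxD _ _ (hcmem k hk)
  have hxc1 : ¬ G.Adj x (c 1) := by
    apply hnoP'
    have := hcmem 1 (by omega)
    simpa using this
  have hxcl : ¬ G.Adj x (c (ℓ - 1)) := by
    apply hnoM'
    have := hcmem (ℓ - 1) (by omega)
    rwa [hl1] at this
  have hcfar : ∀ j k : ℕ, j + 2 ≤ k → k < ℓ → ¬(j = 0 ∧ k = ℓ - 1) → ¬ G.Adj (c j) (c k) :=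
    fun j k hjk hk hnp => hfarNat j k hk hjk hnp (c j) (hcmem j (by omega)) (c k) (hcmem k hk)
  have hHoleC : IsHole G ℓ (fun z => c z.val) :=
    aux_natHole (by omega) c
      (fun j k hj hk heq => by by_contra hne'; exact hcne j k hj hk hne' heq)
      hcadj hcwrap hcfar
  by_cases hS : ∃ k, 0 < k ∧ k < ℓ ∧ G.Adj x (c k)
  · -- x has another neighbour on the hole
    obtain ⟨q, hq, hqminN⟩ : ∃ q, (0 < q ∧ q < ℓ ∧ G.Adj x (c q)) ∧
        ∀ m, m < q → ¬(0 < m ∧ m < ℓ ∧ G.Adj x (c m)) :=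
      ⟨Nat.find hS, Nat.find_spec hS, fun m hm => Nat.find_min hS hm⟩
    obtain ⟨hq0, hqℓ, hqadj⟩ := hq
    have hqmin : ∀ m, 0 < m → m < q → ¬ G.Adj x (c m) := by
      intro m h1 h2 hadj''
      exact hqminN m h2 ⟨h1, by omega, hadj''⟩
    have hq1 : q ≠ 1 := fun h => hxc1 (by rwa [h] at hqadj)
    have hqe : q ≠ ℓ - 1 := fun h => hxcl (by rwa [h] at hqadj)
    have hq2 : 2 ≤ q := by omega
    have hqle : q ≤ ℓ - 2 := by omega
    set d : ℕ → V := fun k => if k = 0 then x else c (k - 1) with hddef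
    have hd : ∀ k, d k = if k = 0 then x else c (k - 1) := fun _ => rfl
    have hdhole : IsHole G (q + 2) (fun z => d z.val) := by
      apply aux_natHole (by omega)
      · intro j k hj hk heq
        rw [hd, hd] at heq
        by_cases hj0 : j = 0 <;> by_cases hk0 : k = 0
        · omega
        · exfalso
          rw [if_pos hj0, if_neg hk0] at heq
          exact hxnc (k - 1) (by omega) heq
        · exfalso
          rw [if_neg hj0, if_pos hk0] at heq
          exact hxnc (j - 1) (by omega) heq.symm
        · rw [if_neg hj0, if_neg hk0] at heq
          by_contra hne'
          exact hcne (j - 1) (k - 1) (by omega) (by omega) (by omega) heq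
      · intro k hk
        by_cases hk0 : k = 0
        · subst hk0
          rw [hd, hd]
          norm_num
          exact hxc0
        · rw [hd, hd, if_neg hk0, if_neg (show k + 1 ≠ 0 by omega)]
          simp only [Nat.add_sub_cancel]
          have h' := hcadj (k - 1) (by omega)
          rwa [show k - 1 + 1 = k by omega] at h'
      · rw [show q + 2 - 1 = q + 1 from rfl, hd, hd,
          if_neg (show q + 1 ≠ 0 by omega), if_pos rfl]
        simp only [Nat.add_sub_cancel]
        exact hqadj.symm
      · intro j k hjk hk hnp
        rw [show q + 2 - 1 = q + 1 from rfl] at hnp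
        rw [hd, hd]
        by_cases hj0 : j = 0
        · subst hj0
          rw [if_pos rfl, if_neg (show k ≠ 0 by omega)]
          have hkq : k ≠ q + 1 := fun h => hnp ⟨rfl, h⟩
          exact hqmin (k - 1) (by omega) (by omega)
        · rw [if_neg hj0, if_neg (show k ≠ 0 by omega)]
          exact hcfar (j - 1) (k - 1) (by omega) (by omega) (by omega)
    by_cases hql2 : q = ℓ - 2
    · -- 4-hole, even: contradiction
      apply heven
      have e1 : x ≠ c (ℓ - 2) := hxnc _ (by omega)
      have e2 : x ≠ c (ℓ - 1) := hxnc _ (by omega)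
      have e3 : x ≠ c 0 := hxnc _ (by omega)
      have e4 : c (ℓ - 2) ≠ c (ℓ - 1) := hcne _ _ (by omega) (by omega) (by omega)
      have e5 : c (ℓ - 2) ≠ c 0 := hcne _ _ (by omega) (by omega) (by omega)
      have e6 : c (ℓ - 1) ≠ c 0 := hcne _ _ (by omega) (by omega) (by omega)
      set g : ℕ → V := fun k => if k = 0 then x else if k = 1 then c (ℓ - 2) else
          if k = 2 then c (ℓ - 1) else c 0 with hgdef
      have hg : ∀ k, g k = if k = 0 then x else if k = 1 then c (ℓ - 2) else
          if k = 2 then c (ℓ - 1) else c 0 := fun _ => rfl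
      have h4 : IsHole G 4 (fun z => g z.val) := by
        apply aux_natHole (le_refl 4) g
        · intro j k hj hk heq
          rw [hg, hg] at heq
          rcases (by omega : j = 0 ∨ j = 1 ∨ j = 2 ∨ j = 3) with rfl | rfl | rfl | rfl <;>
            rcases (by omega : k = 0 ∨ k = 1 ∨ k = 2 ∨ k = 3) with rfl | rfl | rfl | rfl <;>
            norm_num at heq ⊢
          all_goals first
            | exact absurd heq e1 | exact absurd heq e2 | exact absurd heq e3
            | exact absurd heq e4 | exact absurd heq e5 | exact absurd heq e6
            | exact absurd heq.symm e1 | exact absurd heq.symm e2 | exact absurd heq.symm e3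
            | exact absurd heq.symm e4 | exact absurd heq.symm e5 | exact absurd heq.symm e6
        · intro k hk
          rw [hg, hg]
          rcases (by omega : k = 0 ∨ k = 1 ∨ k = 2) with rfl | rfl | rfl <;> norm_num
          · rw [← hql2]; exact hqadj
          · have h' := hcadj (ℓ - 2) (by omega)
            rwa [show ℓ - 2 + 1 = ℓ - 1 by omega] at h'
          · exact hcwrap
        · rw [hg, hg]
          norm_num
          exact hxc0.symm
        · intro j k hjk hk hnp
          rw [hg, hg]
          have hcases : (j = 0 ∧ k = 2) ∨ (j = 1 ∧ k = 3) := by omega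
          rcases hcases with ⟨hj, hk'⟩ | ⟨hj, hk'⟩ <;> subst hj <;> subst hk' <;> norm_num
          · exact hxcl
          · intro hadj''
            exact hcfar 0 (ℓ - 2) (by omega) (by omega) (by omega) hadj''.symm
      exact ⟨4, _, h4, ⟨2, rfl⟩⟩
    · -- pan: hole d plus pendant c (ℓ - 1)
      have hqle3 : q ≤ ℓ - 3 := by omega
      apply hpan
      refine ⟨q + 2, fun z => d z.val, c (ℓ - 1), hdhole, ?_, ?_⟩
      · rintro ⟨z, hz⟩
        have hz' : d z.val = c (ℓ - 1) := hz
        have hzl := ZMod.val_lt z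
        rw [hd] at hz'
        by_cases h0 : z.val = 0
        · rw [if_pos h0] at hz'
          exact hxnc (ℓ - 1) (by omega) hz'
        · rw [if_neg h0] at hz'
          exact hcne (z.val - 1) (ℓ - 1) (by omega) (by omega) (by omega) hz'
      · have hNZq : NeZero (q + 2) := ⟨by omega⟩
        have hv1 : (1 : ZMod (q + 2)).val = 1 := by
          rw [show (1 : ZMod (q + 2)) = ((1 : ℕ) : ZMod (q + 2)) by push_cast; rfl,
            ZMod.val_cast_of_lt (by omega)]
        refine ⟨1, ?_, ?_⟩
        · show G.Adj (c (ℓ - 1)) (d (1 : ZMod (q + 2)).val)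
          rw [hv1, hd]
          norm_num
          exact hcwrap
        · intro z hz
          have hz' : G.Adj (c (ℓ - 1)) (d z.val) := hz
          have hzl := ZMod.val_lt z
          rw [hd] at hz'
          by_cases h0 : z.val = 0
          · exfalso
            rw [if_pos h0] at hz'
            exact hxcl hz'.symm
          · by_cases h1 : z.val = 1
            · have hzc : z = ((z.val : ℕ) : ZMod (q + 2)) := by simp [ZMod.natCast_val]
              rw [hzc, h1]
              push_cast
              rfl
            · exfalso
              rw [if_neg h0] at hz'
              exact hcfar (z.val - 1) (ℓ - 1) (by omega) (by omega) (by omega) hz'.symm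
  · -- x has a unique neighbour on the hole: pan
    apply hpan
    refine ⟨ℓ, fun z => c z.val, x, hHoleC, ?_, 0, ?_, ?_⟩
    · rintro ⟨z, hz⟩
      exact hxnc z.val (ZMod.val_lt z) hz.symm
    · show G.Adj x (c (0 : ZMod ℓ).val)
      rw [ZMod.val_zero]
      exact hxc0
    · intro z hz
      by_contra hz0
      have h1 : z.val ≠ 0 := fun h => hz0 ((ZMod.val_eq_zero z).1 h)
      exact hS ⟨z.val, by omega, ZMod.val_lt z, hz⟩
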